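/- Decay of neighborhood measures: let E ⊆ X be (σ₀,γ₀)-weakly porous with respect to the Macías–Segovia quasi-distance δ with ρ_{δ,E} doubling. For any ball B⁰ = B_δ(x₀,r₀) meeting E and any 0 < ε < ρ_{δ,E}(B⁰), there exist constants p, q ∈ (0,1), independent of ε and of B⁰, such that μ(F(pε)) ≤ q·μ(F(ε)), where F(ε) = {x ∈ B⁰ : δ(x,E) < ε}. Consequently μ(F((p^k/2)ρ_{δ,E}(B⁰))) ≤ q^k μ(B⁰) for every k ≥ 0. -/

import Mathlib

open MeasureTheory ENNReal Set

namespace WPA1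

variable {X : Type*}

/-- `d` is a quasi-distance on `X` with triangular constant `K`. -/
def QD (d : X → X → ℝ) (K : ℝ) : Prop :=
  1 ≤ K ∧ (∀ x y, 0 ≤ d x y) ∧ (∀ x y, d x y = 0 ↔ x = y) ∧
    (∀ x y, d x y = d y x) ∧ ∀ x y z, d x z ≤ K * (d x y + d y z)

/-- The `d`-ball of center `x` and radius `r`. -/
def ball (d : X → X → ℝ) (x : X) (r : ℝ) : Set X := {y | d x y < r}

/-- The optimal (least) triangular constant of `d`. -/
noncomputable def Kopt (d : X → X → ℝ) : ℝ := sInf {K | QD d K}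

/-- Distance from a point to a set: `d(x,E) = inf_{e ∈ E} d(x,e)`. -/
noncomputable def distE (d : X → X → ℝ) (E : Set X) (x : X) : ℝ :=
  sInf ((d x) '' E)

/-- The maximal `E`-free hole function
`ρ_{d,E}(B_d(x,r)) = sup {0 < s ≤ 2Kr : ∃ y, B_d(y,s) ⊆ B_d(x,r) \ E}`
(with value `0` when the set is empty, by `Real.sSup` conventions). -/
noncomputable def hole (d : X → X → ℝ) (K : ℝ) (E : Set X) (x : X) (r : ℝ) : ℝ :=
  sSup {s | 0 < s ∧ s ≤ 2 * K * r ∧ ∃ y, ball d y s ⊆ ball d x r \ E}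

/-- The maximal hole function `ρ_{d,E}` is doubling with constant `C`. -/
def HoleDoubling (d : X → X → ℝ) (K : ℝ) (E : Set X) (C : ℝ) : Prop :=
  ∀ x r, 0 < r → hole d K E x (2 * r) ≤ C * hole d K E x r

/-- The `d`-balls are open and form neighborhood bases: the ambient topology is
the one induced by the quasi-distance `d`. -/
def BallsBasis [TopologicalSpace X] (d : X → X → ℝ) : Prop :=
  (∀ x r, IsOpen (ball d x r)) ∧ ∀ x, ∀ U ∈ nhds x, ∃ r > 0, ball d x r ⊆ U

/-- The measure `μ` is doubling (with constant `A`) on `d`-balls, which have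
positive finite measure; i.e. `(X,d,μ)` is a space of homogeneous type. -/
def DoublingBalls [MeasurableSpace X] (μ : Measure X) (d : X → X → ℝ) (A : ℝ) : Prop :=
  ∀ x r, 0 < r → 0 < μ (ball d x r) ∧ μ (ball d x r) < ⊤ ∧
    μ (ball d x (2 * r)) ≤ ENNReal.ofReal A * μ (ball d x r)

/-- `E` is `(σ,γ)`-weakly porous with respect to `d` and `μ`. -/
def WeaklyPorousWith [MeasurableSpace X] (μ : Measure X) (d : X → X → ℝ) (K : ℝ)
    (E : Set X) (σ γ : ℝ) : Prop :=
  ∀ x r, 0 < r → ∃ (n : ℕ) (c : Fin n → X) (ρ : Fin n → ℝ),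
    (∀ i j, i ≠ j → Disjoint (ball d (c i) (ρ i)) (ball d (c j) (ρ j))) ∧
    (∀ i, ball d (c i) (ρ i) ⊆ ball d x r \ E) ∧
    (∀ i, γ * hole d K E x r ≤ ρ i) ∧
    (∀ i, ρ i ≤ 2 * K * r) ∧
    ENNReal.ofReal σ * μ (ball d x r) ≤ ∑ i, μ (ball d (c i) (ρ i))

/-- `E` is weakly porous with respect to `d` and `μ`. -/
def WeaklyPorous [MeasurableSpace X] (μ : Measure X) (d : X → X → ℝ) (K : ℝ)
    (E : Set X) : Prop :=
  ∃ σ γ : ℝ, σ ∈ Set.Ioo (0:ℝ) 1 ∧ γ ∈ Set.Ioo (0:ℝ) 1 ∧ WeaklyPorousWith μ d K E σ γ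

/-- The weight `d(·,E)^{-α}`, valued in `ℝ≥0∞` (so it is `∞` on `{d(·,E)=0}`). -/
noncomputable def wgt (d : X → X → ℝ) (E : Set X) (α : ℝ) (x : X) : ℝ≥0∞ :=
  ENNReal.ofReal (distE d E x) ^ (-α)

/-- `w` is an `A₁(X,d,μ)`-weight: `w` is locally integrable and the mean value of `w`
over every `d`-ball is bounded by a constant times its essential infimum there. -/
def MemA1 [MeasurableSpace X] (μ : Measure X) (d : X → X → ℝ) (w : X → ℝ≥0∞) : Prop :=
  (∀ x r, 0 < r → ∫⁻ y in ball d x r, w y ∂μ < ⊤) ∧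
  ∃ C : ℝ, 0 < C ∧ ∀ x r, 0 < r →
    ∫⁻ y in ball d x r, w y ∂μ ≤
      ENNReal.ofReal C * essInf w (μ.restrict (ball d x r)) * μ (ball d x r)


section Aux

variable {X : Type*}

lemma ball_mono (d : X → X → ℝ) (x : X) {r r' : ℝ} (h : r ≤ r') :
    ball d x r ⊆ ball d x r' := fun _ hy => lt_of_lt_of_le hy h

lemma hole_nonneg (d : X → X → ℝ) (K : ℝ) (E : Set X) (x : X) (r : ℝ) :
    0 ≤ hole d K E x r :=
  Real.sSup_nonneg (fun _ hs => le_of_lt hs.1)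

lemma hole_bddAbove (d : X → X → ℝ) (K : ℝ) (E : Set X) (x : X) (r : ℝ) :
    BddAbove {s | 0 < s ∧ s ≤ 2 * K * r ∧ ∃ y, ball d y s ⊆ ball d x r \ E} :=
  ⟨2 * K * r, fun _ hs => hs.2.1⟩

lemma le_hole (d : X → X → ℝ) (K : ℝ) (E : Set X) (x : X) (r : ℝ) {s : ℝ}
    (hs : 0 < s) (h2 : s ≤ 2 * K * r) (h3 : ∃ y, ball d y s ⊆ ball d x r \ E) :
    s ≤ hole d K E x r :=
  le_csSup (hole_bddAbove d K E x r) ⟨hs, h2, h3⟩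

lemma hole_le (d : X → X → ℝ) (K : ℝ) (E : Set X) (x : X) {r : ℝ} (hr : 0 ≤ 2 * K * r) :
    hole d K E x r ≤ 2 * K * r :=
  Real.sSup_le (fun _ hs => hs.2.1) hr

lemma hole_mono (d : X → X → ℝ) {K : ℝ} (E : Set X) {x x' : X} {r r' : ℝ}
    (hK : 0 ≤ K) (hr : r ≤ r') (hb : ball d x r ⊆ ball d x' r') :
    hole d K E x r ≤ hole d K E x' r' := by
  rcases Set.eq_empty_or_nonempty
    {s | 0 < s ∧ s ≤ 2 * K * r ∧ ∃ y, ball d y s ⊆ ball d x r \ E} with h | h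
  · rw [hole, h, Real.sSup_empty]; exact hole_nonneg d K E x' r'
  · apply csSup_le_csSup (hole_bddAbove d K E x' r') h
    rintro s ⟨h1, h2, y, h3⟩
    exact ⟨h1, h2.trans (by nlinarith), y, h3.trans (Set.diff_subset_diff_left hb)⟩

lemma hole_pow (d : X → X → ℝ) {K : ℝ} {E : Set X} {C : ℝ}
    (hdbl : HoleDoubling d K E C) (x : X) {r : ℝ} (hr : 0 < r) (k : ℕ) :
    hole d K E x (2 ^ k * r) ≤ (max C 1) ^ k * hole d K E x r := by
  induction k with
  | zero => simp
  | succ k ih =>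
      have h1 : hole d K E x (2 * (2 ^ k * r)) ≤ C * hole d K E x (2 ^ k * r) :=
        hdbl x _ (by positivity)
      have h2 : C * hole d K E x (2 ^ k * r) ≤ max C 1 * hole d K E x (2 ^ k * r) :=
        mul_le_mul_of_nonneg_right (le_max_left _ _) (hole_nonneg _ _ _ _ _)
      have h3 : max C 1 * hole d K E x (2 ^ k * r) ≤
          max C 1 * ((max C 1) ^ k * hole d K E x r) :=
        mul_le_mul_of_nonneg_left ih (le_trans zero_le_one (le_max_right _ _))
      have h4 : (2:ℝ) ^ (k+1) * r = 2 * (2 ^ k * r) := by ring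
      rw [h4]
      calc hole d K E x (2 * (2 ^ k * r)) ≤ _ := h1.trans (h2.trans h3)
        _ = (max C 1) ^ (k+1) * hole d K E x r := by ring

lemma distE_nonneg {δ : X → X → ℝ} {Kδ : ℝ} (hδ : QD δ Kδ) (E : Set X) (x : X) :
    0 ≤ distE δ E x :=
  Real.sInf_nonneg (by rintro t ⟨e, _, rfl⟩; exact hδ.2.1 x e)

lemma distE_lt_iff {δ : X → X → ℝ} {Kδ : ℝ} (hδ : QD δ Kδ) {E : Set X} (hE : E.Nonempty)
    {x : X} {t : ℝ} : distE δ E x < t ↔ ∃ e ∈ E, δ x e < t := by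
  constructor
  · intro h
    obtain ⟨s, ⟨e, he, rfl⟩, hs⟩ := exists_lt_of_csInf_lt (hE.image _) h
    exact ⟨e, he, hs⟩
  · rintro ⟨e, he, hlt⟩
    exact lt_of_le_of_lt (csInf_le ⟨0, by rintro s ⟨e', _, rfl⟩; exact hδ.2.1 x e'⟩
      (Set.mem_image_of_mem _ he)) hlt

lemma distE_le {δ : X → X → ℝ} {Kδ : ℝ} (hδ : QD δ Kδ) {E : Set X} {e : X} (he : e ∈ E)
    (x : X) : distE δ E x ≤ δ x e :=
  csInf_le ⟨0, by rintro s ⟨e', _, rfl⟩; exact hδ.2.1 x e'⟩ (Set.mem_image_of_mem _ he)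

lemma le_distE {δ : X → X → ℝ} {E : Set X} (hE : E.Nonempty) {x : X} {t : ℝ}
    (h : ∀ e ∈ E, t ≤ δ x e) : t ≤ distE δ E x :=
  le_csInf (hE.image _) (by rintro s ⟨e, he, rfl⟩; exact h e he)

lemma distE_open {δ : X → X → ℝ} {Kδ : ℝ} [TopologicalSpace X] (hδ : QD δ Kδ)
    (hopen : ∀ x r, IsOpen (ball δ x r)) {E : Set X} (hE : E.Nonempty) (t : ℝ) :
    IsOpen {x | distE δ E x < t} := by
  have h : {x | distE δ E x < t} = ⋃ e ∈ E, ball δ e t := by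
    ext x
    simp only [Set.mem_setOf_eq, Set.mem_iUnion, exists_prop]
    rw [distE_lt_iff hδ hE]
    constructor
    · rintro ⟨e, he, hlt⟩
      exact ⟨e, he, show δ e x < t by rw [hδ.2.2.2.1 e x]; exact hlt⟩
    · rintro ⟨e, he, hlt⟩
      exact ⟨e, he, show δ x e < t by rw [hδ.2.2.2.1 x e]; exact hlt⟩
  rw [h]; exact isOpen_biUnion (fun e _ => hopen e t)

lemma dbl_delta [MeasurableSpace X] (μ : Measure X) (d δ : X → X → ℝ) (K A : ℝ)
    (hd : QD d K) (hA : DoublingBalls μ d A)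
    (hequiv : ∀ x y, δ x y ≤ d x y ∧ d x y ≤ 3 * K ^ 2 * δ x y)
    {L : ℝ} (hL : 0 < L) :
    ∃ m : ℕ, ∀ c s, 0 < s →
      μ (ball δ c (L * s)) ≤ ENNReal.ofReal ((max A 1) ^ m) * μ (ball δ c s) := by
  have hK : (1:ℝ) ≤ K := hd.1
  obtain ⟨m, hm⟩ := pow_unbounded_of_one_lt (3 * K ^ 2 * L) (one_lt_two (α := ℝ))
  refine ⟨m, fun c s hs => ?_⟩
  have hiter : ∀ j : ℕ, μ (ball d c (2 ^ j * s)) ≤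
      ENNReal.ofReal ((max A 1) ^ j) * μ (ball d c s) := by
    intro j
    induction j with
    | zero => simp
    | succ j ih =>
        have h1 : (2:ℝ) ^ (j+1) * s = 2 * (2 ^ j * s) := by ring
        rw [h1]
        calc μ (ball d c (2 * (2 ^ j * s)))
            ≤ ENNReal.ofReal A * μ (ball d c (2 ^ j * s)) :=
              (hA c (2 ^ j * s) (by positivity)).2.2
          _ ≤ ENNReal.ofReal (max A 1) *
              (ENNReal.ofReal ((max A 1) ^ j) * μ (ball d c s)) :=
              mul_le_mul' (ENNReal.ofReal_le_ofReal (le_max_left _ _)) ih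
          _ = ENNReal.ofReal ((max A 1) ^ (j+1)) * μ (ball d c s) := by
              rw [← mul_assoc, ← ENNReal.ofReal_mul (by positivity)]
              ring_nf
  have h1 : ball δ c (L * s) ⊆ ball d c (2 ^ m * s) := by
    intro y hy
    have h2 := (hequiv c y).2
    have h3 : (0:ℝ) < 3 * K ^ 2 := by nlinarith
    have hy' : δ c y < L * s := hy
    show d c y < 2 ^ m * s
    nlinarith [(hd.2.1 c y : 0 ≤ d c y), hm, hs]
  calc μ (ball δ c (L * s)) ≤ μ (ball d c (2 ^ m * s)) := measure_mono h1
    _ ≤ ENNReal.ofReal ((max A 1) ^ m) * μ (ball d c s) := hiter m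
    _ ≤ ENNReal.ofReal ((max A 1) ^ m) * μ (ball δ c s) :=
        mul_le_mul_right (measure_mono (fun y hy =>
          lt_of_le_of_lt (hequiv c y).1 hy)) _

end Aux

set_option maxHeartbeats 1600000 in
/-- Decay of neighborhood measures: for `E` `(σ₀,γ₀)`-weakly porous w.r.t. the
Macías–Segovia quasi-distance `δ` with `ρ_{δ,E}` doubling, there are `p,q ∈ (0,1)`,
independent of the ball and of `ε`, with `μ(F(pε)) ≤ q μ(F(ε))` for every ball
`B⁰ = B_δ(x₀,r₀)` meeting `E` and every `0 < ε < ρ_{δ,E}(B⁰)`, where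
`F(ε) = {x ∈ B⁰ : δ(x,E) < ε}`; consequently
`μ(F((p^k/2) ρ_{δ,E}(B⁰))) ≤ q^k μ(B⁰)` for every `k ≥ 0`. -/
theorem statement15 {X : Type*} [TopologicalSpace X] [MeasurableSpace X] [BorelSpace X]
    (μ : Measure X) (d δ : X → X → ℝ) (K Kδ A C σ₀ γ₀ β : ℝ)
    (hd : QD d K) (hδ : QD δ Kδ) (hb : BallsBasis d) (hA : DoublingBalls μ d A)
    (hopenδ : ∀ x r, IsOpen (ball δ x r))
    (hequiv : ∀ x y, δ x y ≤ d x y ∧ d x y ≤ 3 * K ^ 2 * δ x y)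
    (hβ : β ∈ Set.Ioo (0:ℝ) 1)
    (hint : ∀ x r t y, 0 < r → 0 < t → t ≤ 2 * Kδ * r → y ∈ ball δ x r →
      ∃ z, ball δ z (β * t) ⊆ ball δ y t ∩ ball δ x r)
    (E : Set X) (hE : E.Nonempty)
    (hσ : σ₀ ∈ Set.Ioo (0:ℝ) 1) (hγ : γ₀ ∈ Set.Ioo (0:ℝ) 1)
    (hwp : WeaklyPorousWith μ δ Kδ E σ₀ γ₀)
    (hC : 0 < C) (hdbl : HoleDoubling δ Kδ E C) :
    ∃ p q : ℝ, p ∈ Set.Ioo (0:ℝ) 1 ∧ q ∈ Set.Ioo (0:ℝ) 1 ∧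
      ∀ x₀ : X, ∀ r₀ : ℝ, 0 < r₀ → (ball δ x₀ r₀ ∩ E).Nonempty →
        ((∀ ε : ℝ, 0 < ε → ε < hole δ Kδ E x₀ r₀ →
          μ {x ∈ ball δ x₀ r₀ | distE δ E x < p * ε} ≤
            ENNReal.ofReal q * μ {x ∈ ball δ x₀ r₀ | distE δ E x < ε}) ∧
        ∀ k : ℕ,
          μ {x ∈ ball δ x₀ r₀ | distE δ E x < p ^ k / 2 * hole δ Kδ E x₀ r₀} ≤
            ENNReal.ofReal q ^ k * μ (ball δ x₀ r₀)) := by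
  have hδQD := hδ
  obtain ⟨hK1δ, hδ0, hδeq, hδsymm, hδtri⟩ := hδ
  obtain ⟨hβ0, hβ1⟩ := hβ
  obtain ⟨hσ0, hσ1⟩ := hσ
  obtain ⟨hγ0, hγ1⟩ := hγ
  have hKδ0 : (0:ℝ) < Kδ := lt_of_lt_of_le one_pos hK1δ
  have hKδne : Kδ ≠ 0 := ne_of_gt hKδ0
  have hβne : β ≠ 0 := ne_of_gt hβ0
  have hσne : σ₀ ≠ 0 := ne_of_gt hσ0
  set C' : ℝ := max C 1 with hC'
  have hC'1 : (1:ℝ) ≤ C' := le_max_right _ _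
  have hC'0 : (0:ℝ) < C' := lt_of_lt_of_le one_pos hC'1
  obtain ⟨k₁, hk₁'⟩ := pow_unbounded_of_one_lt (2 * Kδ / β) (one_lt_two (α := ℝ))
  have hk₁ : 2 * Kδ ≤ 2 ^ k₁ * β := by
    rw [div_lt_iff₀ hβ0] at hk₁'
    linarith only [hk₁']
  have hCk1 : (1:ℝ) ≤ C' ^ k₁ := one_le_pow₀ hC'1
  set c₁ : ℝ := (C' ^ k₁)⁻¹ with hc₁
  have hc₁0 : 0 < c₁ := by positivity
  have hc₁1 : c₁ ≤ 1 := by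
    rw [hc₁]
    exact inv_le_one_of_one_le₀ hCk1
  set p₁ : ℝ := γ₀ * c₁ / (2 * Kδ) with hp₁
  have hp₁0 : 0 < p₁ := by positivity
  have hp₁1 : p₁ < 1 := by
    rw [hp₁, div_lt_one (by positivity)]
    have h1 : γ₀ * c₁ ≤ 1 * 1 := mul_le_mul hγ1.le hc₁1 hc₁0.le zero_le_one
    linarith only [h1, hK1δ]
  set N₁ : ℝ := Kδ * C' ^ 2 * (1 + 2 / β) + C' ^ 2 / β + Kδ with hN₁
  have hN₁1 : (1:ℝ) ≤ N₁ := by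
    have h1 : 0 < Kδ * C' ^ 2 * (1 + 2 / β) := by positivity
    have h2 : 0 < C' ^ 2 / β := by positivity
    rw [hN₁]; linarith only [h1, h2, hK1δ]
  have hN₁0 : (0:ℝ) < N₁ := lt_of_lt_of_le one_pos hN₁1
  obtain ⟨m₂, hm₂⟩ := dbl_delta μ d δ K A hd hA hequiv (L := 2 * Kδ) (by positivity)
  obtain ⟨m₄, hm₄⟩ := dbl_delta μ d δ K A hd hA hequiv
    (L := Kδ * (1 + 3 * Kδ) / β) (by positivity)
  have hA'0 : (0:ℝ) < max A 1 := lt_of_lt_of_le one_pos (le_max_right A 1)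
  set T : ℝ := (max A 1) ^ m₄ * ((1 / σ₀) * (max A 1) ^ m₂) with hT
  have hT0 : 0 < T := by
    apply mul_pos (pow_pos hA'0 _) (mul_pos (by positivity) (pow_pos hA'0 _))
  set q : ℝ := T / (1 + T) with hq
  set p : ℝ := p₁ / N₁ with hp
  have hp0 : 0 < p := by positivity
  have hp1 : p < 1 := by
    rw [hp, div_lt_one hN₁0]; linarith
  have hq0 : 0 < q := div_pos hT0 (by linarith)
  have hq1 : q < 1 := by
    rw [hq, div_lt_one (by linarith)]; linarith
  clear_value C' c₁ p₁ N₁ T q p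
  -- positivity and finiteness of δ-balls
  have hposδ : ∀ x r, 0 < r → 0 < μ (ball δ x r) := fun x r hr =>
    lt_of_lt_of_le (hA x r hr).1 (measure_mono (fun y hy =>
      lt_of_le_of_lt (hequiv x y).1 hy))
  have hfinδ : ∀ x r, 0 < r → μ (ball δ x r) < ⊤ := by
    intro x r hr
    have hK1 : (1:ℝ) ≤ K := hd.1
    have h3 : (0:ℝ) < 3 * K ^ 2 := by nlinarith
    refine lt_of_le_of_lt (measure_mono ?_) (hA x (3 * K ^ 2 * r) (by positivity)).2.1
    intro y hy
    have h2 := (hequiv x y).2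
    have hy' : δ x y < r := hy
    show d x y < 3 * K ^ 2 * r
    have h5 : 3 * K ^ 2 * δ x y < 3 * K ^ 2 * r := mul_lt_mul_of_pos_left hy' h3
    linarith
  -- THE KEY LEMMA (single-step decay)
  have key : ∀ x₀ : X, ∀ r₀ : ℝ, 0 < r₀ → ∀ ε' : ℝ, 0 < ε' → ε' < hole δ Kδ E x₀ r₀ →
      μ {x ∈ ball δ x₀ r₀ | distE δ E x < p * ε'} ≤
        ENNReal.ofReal q * μ {x ∈ ball δ x₀ r₀ | distE δ E x < ε'} := by
    intro x₀ r₀ hr₀ ε' hε' hε'h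
    set ε : ℝ := ε' / N₁ with hεdef
    have hε0 : 0 < ε := by positivity
    have hN₁ne : N₁ ≠ 0 := ne_of_gt hN₁0
    have hεN : N₁ * ε = ε' := by
      rw [hεdef]; field_simp
    have hpε : p * ε' = p₁ * ε := by
      rw [hp, hεdef]; ring
    have hεle : ε ≤ ε' := by
      rw [hεdef, div_le_iff₀ hN₁0]
      linarith only [mul_le_mul_of_nonneg_left hN₁1 hε'.le]
    have hεh : ε < hole δ Kδ E x₀ r₀ := lt_of_le_of_lt hεle hε'h
    clear_value ε
    -- adapted radii
    set Sx : X → Set ℝ := fun y => {r | 0 < r ∧ ε < hole δ Kδ E y r} with hSxdef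
    set Rx : X → ℝ := fun y => min (2 * sInf (Sx y)) (2 * Kδ * r₀) with hRxdef
    have hball_trans : ∀ x, x ∈ ball δ x₀ r₀ → ball δ x₀ r₀ ⊆ ball δ x (2 * Kδ * r₀) := by
      intro x hx y hy
      have h1 : δ x x₀ < r₀ := by rw [hδsymm x x₀]; exact hx
      have h2 := hδtri x x₀ y
      have hy' : δ x₀ y < r₀ := hy
      show δ x y < 2 * Kδ * r₀
      have h3 : δ x x₀ + δ x₀ y < 2 * r₀ := by linarith only [h1, hy']
      have h4 := mul_lt_mul_of_pos_left h3 hKδ0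
      linarith only [h2, h4]
    have h2K : (1:ℝ) ≤ 2 * Kδ := by linarith only [hK1δ]
    have hF1 : ∀ x, x ∈ ball δ x₀ r₀ → ε < hole δ Kδ E x (2 * Kδ * r₀) := fun x hx =>
      lt_of_lt_of_le hεh (hole_mono δ E hKδ0.le
        (le_mul_of_one_le_left hr₀.le h2K) (hball_trans x hx))
    have hSx_ne : ∀ x, x ∈ ball δ x₀ r₀ → (Sx x).Nonempty := fun x hx =>
      ⟨2 * Kδ * r₀, by positivity, hF1 x hx⟩
    have hSx_bdd : ∀ x, BddBelow (Sx x) := fun x => ⟨0, fun r hr => le_of_lt hr.1⟩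
    have hSx_lb : ∀ x r, r ∈ Sx x → ε / (2 * Kδ) < r := by
      intro x r hr
      have h1 : hole δ Kδ E x r ≤ 2 * Kδ * r := hole_le δ Kδ E x
        (mul_nonneg (by linarith only [hKδ0]) hr.1.le)
      have h2 : ε < hole δ Kδ E x r := hr.2
      rw [div_lt_iff₀ (by positivity)]
      linarith only [h1, h2]
    have hrin_lb : ∀ x, x ∈ ball δ x₀ r₀ → ε / (2 * Kδ) ≤ sInf (Sx x) := fun x hx =>
      le_csInf (hSx_ne x hx) (fun r hr => (hSx_lb x r hr).le)
    have hrin_pos : ∀ x, x ∈ ball δ x₀ r₀ → 0 < sInf (Sx x) := fun x hx =>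
      lt_of_lt_of_le (by positivity) (hrin_lb x hx)
    have hbasic : ∀ x, x ∈ ball δ x₀ r₀ → 0 < Rx x ∧ Rx x ≤ 2 * Kδ * r₀ ∧
        ε < hole δ Kδ E x (Rx x) ∧ hole δ Kδ E x (Rx x) ≤ C' ^ 2 * ε := by
      intro x hx
      have hrp := hrin_pos x hx
      have hRval : Rx x = min (2 * sInf (Sx x)) (2 * Kδ * r₀) := rfl
      have hRpos : 0 < Rx x := by
        rw [hRval]; exact lt_min (by linarith) (by positivity)
      have hRle : Rx x ≤ 2 * Kδ * r₀ := by rw [hRval]; exact min_le_right _ _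
      have hgt : ε < hole δ Kδ E x (Rx x) := by
        rcases le_or_gt (2 * sInf (Sx x)) (2 * Kδ * r₀) with hcase | hcase
        · have heq : Rx x = 2 * sInf (Sx x) := by rw [hRval]; exact min_eq_left hcase
          obtain ⟨r, hrS, hrlt⟩ := exists_lt_of_csInf_lt (hSx_ne x hx)
            (show sInf (Sx x) < 2 * sInf (Sx x) by linarith)
          refine lt_of_lt_of_le hrS.2 (hole_mono δ E hKδ0.le ?_ (ball_mono δ x ?_))
          · rw [heq]; linarith
          · rw [heq]; linarith
        · have heq : Rx x = 2 * Kδ * r₀ := by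
            rw [hRval]; exact min_eq_right hcase.le
          rw [heq]; exact hF1 x hx
      have h4 : Rx x / 4 < sInf (Sx x) := by
        rcases le_or_gt (2 * sInf (Sx x)) (2 * Kδ * r₀) with hcase | hcase
        · have heq : Rx x = 2 * sInf (Sx x) := by rw [hRval]; exact min_eq_left hcase
          rw [heq]; linarith
        · have heq : Rx x = 2 * Kδ * r₀ := by
            rw [hRval]; exact min_eq_right hcase.le
          rw [heq]; linarith
      have hnotin : hole δ Kδ E x (Rx x / 4) ≤ ε := by
        by_contra hcon
        push_neg at hcon
        have hmem : Rx x / 4 ∈ Sx x := ⟨by linarith, hcon⟩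
        have := csInf_le (hSx_bdd x) hmem
        linarith
      have heq4 : (2:ℝ) ^ 2 * (Rx x / 4) = Rx x := by ring
      have hdblp := hole_pow δ hdbl x (show 0 < Rx x / 4 by linarith) 2
      rw [heq4] at hdblp
      refine ⟨hRpos, hRle, hgt, ?_⟩
      calc hole δ Kδ E x (Rx x) ≤ (max C 1) ^ 2 * hole δ Kδ E x (Rx x / 4) := hdblp
        _ ≤ C' ^ 2 * ε := by
            rw [hC']
            exact mul_le_mul_of_nonneg_left hnotin (by positivity)
    -- main construction for each center
    have main : ∀ x, x ∈ ball δ x₀ r₀ → distE δ E x < p₁ * ε →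
        ∃ g : Set X, MeasurableSet g ∧ g ⊆ ball δ x (Rx x) ∧
          (∀ u ∈ g, u ∈ ball δ x₀ r₀ ∧ p₁ * ε ≤ distE δ E u ∧ distE δ E u < N₁ * ε) ∧
          μ (ball δ x (3 * Kδ * Rx x)) ≤ ENNReal.ofReal T * μ g := by
      intro x hx hxd
      obtain ⟨hRpos, hRle, hRgt, hRle2⟩ := hbasic x hx
      obtain ⟨z, hz⟩ := hint x₀ r₀ (Rx x) x hr₀ hRpos hRle hx
      have hzz : z ∈ ball δ z (β * Rx x) := by
        show δ z z < β * Rx x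
        rw [(hδeq z z).mpr rfl]; positivity
      have hzx : z ∈ ball δ x (Rx x) := (hz hzz).1
      have hβR : 0 < β * Rx x := by positivity
      have hβRle : β * Rx x ≤ Rx x := mul_le_of_le_one_left hRpos.le hβ1.le
      have hzup : hole δ Kδ E z (β * Rx x) ≤ C' ^ 2 * ε :=
        le_trans (hole_mono δ E hKδ0.le hβRle (hz.trans Set.inter_subset_left)) hRle2
      have hzlo : c₁ * ε < hole δ Kδ E z (β * Rx x) := by
        have hbsub : ball δ x (Rx x) ⊆ ball δ z (2 * Kδ * Rx x) := by
          intro y hy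
          have h1 : δ z x < Rx x := by rw [hδsymm z x]; exact hzx
          have h2 := hδtri z x y
          have hy' : δ x y < Rx x := hy
          show δ z y < 2 * Kδ * Rx x
          have h3 : δ z x + δ x y < 2 * Rx x := by linarith only [h1, hy']
          have h4 := mul_lt_mul_of_pos_left h3 hKδ0
          linarith only [h2, h4]
        have h1 : hole δ Kδ E x (Rx x) ≤ hole δ Kδ E z (2 * Kδ * Rx x) :=
          hole_mono δ E hKδ0.le (le_mul_of_one_le_left hRpos.le h2K) hbsub
        have hkk : 2 * Kδ * Rx x ≤ 2 ^ k₁ * (β * Rx x) := by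
          have := mul_le_mul_of_nonneg_right hk₁ hRpos.le
          linarith only [this]
        have h2 : hole δ Kδ E z (2 * Kδ * Rx x) ≤ hole δ Kδ E z (2 ^ k₁ * (β * Rx x)) :=
          hole_mono δ E hKδ0.le hkk (ball_mono δ z hkk)
        have h3 := hole_pow δ hdbl z hβR k₁
        rw [← hC'] at h3
        have h4 : ε < C' ^ k₁ * hole δ Kδ E z (β * Rx x) := by linarith
        rw [hc₁]
        calc (C' ^ k₁)⁻¹ * ε < (C' ^ k₁)⁻¹ * (C' ^ k₁ * hole δ Kδ E z (β * Rx x)) :=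
              mul_lt_mul_of_pos_left h4 (by positivity)
          _ = hole δ Kδ E z (β * Rx x) := by field_simp
      obtain ⟨n, cc, ρ, hdisj, hsubE, hρlo, hρhi, hmeasLB⟩ := hwp z (β * Rx x) hβR
      have hρ_pos : ∀ i, γ₀ * c₁ * ε < ρ i := fun i =>
        lt_of_lt_of_le (by
          have := mul_lt_mul_of_pos_left hzlo hγ0
          linarith only [this]) (hρlo i)
      have hρ_pos' : ∀ i, 0 < ρ i := fun i => lt_trans (by positivity) (hρ_pos i)
      have hρ_le : ∀ i, ρ i ≤ C' ^ 2 * ε := by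
        intro i
        have hmem : ρ i ≤ hole δ Kδ E x (Rx x) :=
          le_hole δ Kδ E x (Rx x) (hρ_pos' i)
            (le_trans (hρhi i) (by
              have := mul_le_mul_of_nonneg_left hβRle (by linarith only [hKδ0] : (0:ℝ) ≤ 2 * Kδ)
              linarith only [this]))
            ⟨cc i, (hsubE i).trans (Set.diff_subset_diff_left
              (hz.trans Set.inter_subset_left))⟩
        exact hmem.trans hRle2
      set g : Set X := ⋃ i, ball δ (cc i) (ρ i / (2 * Kδ)) with hgdef
      have hSmono : ∀ i, ball δ (cc i) (ρ i / (2 * Kδ)) ⊆ ball δ (cc i) (ρ i) := fun i =>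
        ball_mono δ _ (by
          rw [div_le_iff₀ (by positivity)]
          exact le_mul_of_one_le_right (hρ_pos' i).le h2K)
      have hg_subx : g ⊆ ball δ x (Rx x) := by
        refine Set.iUnion_subset fun i => (hSmono i).trans ?_
        exact (hsubE i).trans (Set.diff_subset.trans (hz.trans Set.inter_subset_left))
      refine ⟨g, MeasurableSet.iUnion (fun i => (hopenδ _ _).measurableSet), hg_subx, ?_, ?_⟩
      · -- annulus properties
        intro u hu
        obtain ⟨i, hui'⟩ := Set.mem_iUnion.mp hu
        have hui : δ (cc i) u < ρ i / (2 * Kδ) := hui'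
        have hu_ball : u ∈ ball δ (cc i) (ρ i) := hSmono i hui'
        have hu_z : u ∈ ball δ z (β * Rx x) := ((hsubE i) hu_ball).1
        have hu_x : u ∈ ball δ x (Rx x) := (hz hu_z).1
        have hu_B0 : u ∈ ball δ x₀ r₀ := (hz hu_z).2
        refine ⟨hu_B0, ?_, ?_⟩
        · -- lower bound on distE
          apply le_distE hE
          intro e he
          have he1 : ρ i ≤ δ (cc i) e := by
            by_contra hcon
            push_neg at hcon
            exact ((hsubE i) (show e ∈ ball δ (cc i) (ρ i) from hcon)).2 he
          have htri := hδtri (cc i) u e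
          have e1 : Kδ * δ (cc i) u < Kδ * (ρ i / (2 * Kδ)) := mul_lt_mul_of_pos_left hui hKδ0
          have e2 : Kδ * (ρ i / (2 * Kδ)) = ρ i / 2 := by field_simp
          have h6 : ρ i / (2 * Kδ) ≤ δ u e := by
            rw [div_le_iff₀ (by positivity)]
            linarith only [he1, htri, e1, e2]
          have h7 : p₁ * ε < ρ i / (2 * Kδ) := by
            rw [hp₁, div_mul_eq_mul_div, div_lt_div_iff₀ (by positivity) (by positivity)]
            have h70 := hρ_pos i
            nlinarith only [h70, hKδ0]
          linarith only [h6, h7]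
        · -- upper bound on distE
          by_cases hR : Rx x ≤ C' ^ 2 * ε / (β * Kδ)
          · obtain ⟨e, heE, hxe⟩ := (distE_lt_iff hδQD hE).mp hxd
            have hxe' : δ x e < ε :=
              lt_of_lt_of_le hxe (mul_le_of_le_one_left hε0.le hp₁1.le)
            have hxu : δ x u < Rx x := hu_x
            have htri := hδtri u x e
            have hux : δ u x = δ x u := hδsymm u x
            have hde : distE δ E u ≤ δ u e := distE_le hδQD heE u
            have hKR : Kδ * Rx x ≤ C' ^ 2 * ε / β := by
              have h1 := mul_le_mul_of_nonneg_left hR hKδ0.le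
              calc Kδ * Rx x ≤ Kδ * (C' ^ 2 * ε / (β * Kδ)) := h1
                _ = C' ^ 2 * ε / β := by field_simp
            have hfin1 : 0 < Kδ * C' ^ 2 * (1 + 2 / β) * ε := by positivity
            calc distE δ E u ≤ δ u e := hde
              _ ≤ Kδ * (δ u x + δ x e) := htri
              _ < Kδ * (Rx x + ε) := by
                  apply mul_lt_mul_of_pos_left _ hKδ0
                  rw [hux]; linarith
              _ = Kδ * Rx x + Kδ * ε := by ring
              _ ≤ C' ^ 2 * ε / β + Kδ * ε := by linarith only [hKR]
              _ < N₁ * ε := by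
                  rw [hN₁]; ring_nf; ring_nf at hfin1; linarith only [hfin1]
          · push_neg at hR
            set t : ℝ := 2 * C' ^ 2 * ε / β with htdef
            have ht0 : 0 < t := by positivity
            have hβt : β * t = 2 * C' ^ 2 * ε := by
              rw [htdef]; field_simp
            have ht2 : t ≤ 2 * Kδ * Rx x := by
              have h1 := (div_lt_iff₀ (by positivity : (0:ℝ) < β * Kδ)).mp hR
              rw [htdef, div_le_iff₀ hβ0]
              linarith only [h1]
            clear_value t
            have hcic : cc i ∈ ball δ (cc i) (ρ i) := by
              show δ (cc i) (cc i) < ρ i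
              rw [(hδeq _ _).mpr rfl]; exact hρ_pos' i
            have hcix : cc i ∈ ball δ x (Rx x) :=
              (hz (((hsubE i) hcic).1)).1
            obtain ⟨z', hz'⟩ := hint x (Rx x) t (cc i) hRpos ht0 ht2 hcix
            have hEz' : (ball δ z' (β * t) ∩ E).Nonempty := by
              by_contra hcon
              rw [Set.not_nonempty_iff_eq_empty] at hcon
              have hsub' : ball δ z' (β * t) ⊆ ball δ x (Rx x) \ E := by
                intro w hw
                refine ⟨(hz' hw).2, fun hwE => ?_⟩
                have : w ∈ ball δ z' (β * t) ∩ E := ⟨hw, hwE⟩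
                rw [hcon] at this
                exact this
              have hβtle : β * t ≤ hole δ Kδ E x (Rx x) :=
                le_hole δ Kδ E x (Rx x) (by positivity)
                  (by linarith only [mul_le_of_le_one_left ht0.le hβ1.le, ht2]) ⟨z', hsub'⟩
              rw [hβt] at hβtle
              have hcc2 : 0 < C' ^ 2 * ε := by positivity
              linarith only [hβtle, hRle2, hcc2]
            obtain ⟨e, he_mem⟩ := hEz'
            have heE : e ∈ E := he_mem.2
            have hcie : δ (cc i) e < t := (hz' he_mem.1).1
            have htri := hδtri u (cc i) e
            have hsymm : δ u (cc i) = δ (cc i) u := hδsymm u (cc i)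
            have hde : distE δ E u ≤ δ u e := distE_le hδQD heE u
            have h9 : ρ i / (2 * Kδ) ≤ C' ^ 2 * ε / (2 * Kδ) :=
              (div_le_div_iff_of_pos_right (by positivity)).mpr (hρ_le i)
            have hpos1 : 0 < Kδ * C' ^ 2 * ε := by positivity
            have hpos2 : 0 < C' ^ 2 * ε / β := by positivity
            calc distE δ E u ≤ δ u e := hde
              _ ≤ Kδ * (δ u (cc i) + δ (cc i) e) := htri
              _ < Kδ * (C' ^ 2 * ε / (2 * Kδ) + 2 * C' ^ 2 * ε / β) := by
                  apply mul_lt_mul_of_pos_left _ hKδ0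
                  rw [hsymm, ← htdef]
                  have h10 := lt_of_lt_of_le hui h9
                  linarith only [h10, hcie]
              _ = C' ^ 2 * ε / 2 + 2 * Kδ * C' ^ 2 * ε / β := by field_simp
              _ < N₁ * ε := by
                  rw [hN₁]
                  have hKC : C' ^ 2 * ε ≤ Kδ * (C' ^ 2 * ε) :=
                    le_mul_of_one_le_left (by positivity) hK1δ
                  have hpos3 : 0 < Kδ * ε := by positivity
                  have hcc2 : 0 < C' ^ 2 * ε := by positivity
                  ring_nf; ring_nf at hpos2; linarith only [hKC, hpos2, hpos3, hcc2]
      · -- measure estimate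
        have hsub1 : ball δ x (3 * Kδ * Rx x) ⊆
            ball δ z (Kδ * (1 + 3 * Kδ) / β * (β * Rx x)) := by
          intro y hy
          have heqr : Kδ * (1 + 3 * Kδ) / β * (β * Rx x) = Kδ * (1 + 3 * Kδ) * Rx x := by
            field_simp
          rw [heqr]
          have htri := hδtri z x y
          have h1 : δ z x < Rx x := by rw [hδsymm z x]; exact hzx
          have h2 : δ x y < 3 * Kδ * Rx x := hy
          show δ z y < Kδ * (1 + 3 * Kδ) * Rx x
          have h3 : δ z x + δ x y < (1 + 3 * Kδ) * Rx x := by linarith only [h1, h2]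
          have h4 := mul_lt_mul_of_pos_left h3 hKδ0
          linarith only [htri, h4]
        have hstep1 : μ (ball δ x (3 * Kδ * Rx x)) ≤
            ENNReal.ofReal ((max A 1) ^ m₄) * μ (ball δ z (β * Rx x)) :=
          le_trans (measure_mono hsub1) (hm₄ z (β * Rx x) hβR)
        have hgsum : μ g = ∑ i, μ (ball δ (cc i) (ρ i / (2 * Kδ))) := by
          rw [hgdef, measure_iUnion ?_ (fun i => (hopenδ _ _).measurableSet), tsum_fintype]
          intro i j hij
          exact ((hdisj i j hij).mono (hSmono i) (hSmono j))
        have hstep2 : ∀ i, μ (ball δ (cc i) (ρ i)) ≤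
            ENNReal.ofReal ((max A 1) ^ m₂) * μ (ball δ (cc i) (ρ i / (2 * Kδ))) := by
          intro i
          have hpos : 0 < ρ i / (2 * Kδ) := div_pos (hρ_pos' i) (by positivity)
          have heqr : 2 * Kδ * (ρ i / (2 * Kδ)) = ρ i := by field_simp
          have := hm₂ (cc i) (ρ i / (2 * Kδ)) hpos
          rw [heqr] at this
          exact this
        have hstep3 : ENNReal.ofReal σ₀ * μ (ball δ z (β * Rx x)) ≤
            ENNReal.ofReal ((max A 1) ^ m₂) * μ g := by
          calc ENNReal.ofReal σ₀ * μ (ball δ z (β * Rx x)) ≤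
              ∑ i, μ (ball δ (cc i) (ρ i)) := hmeasLB
            _ ≤ ∑ i, ENNReal.ofReal ((max A 1) ^ m₂) * μ (ball δ (cc i) (ρ i / (2 * Kδ))) :=
                Finset.sum_le_sum (fun i _ => hstep2 i)
            _ = ENNReal.ofReal ((max A 1) ^ m₂) * ∑ i, μ (ball δ (cc i) (ρ i / (2 * Kδ))) :=
                (Finset.mul_sum _ _ _).symm
            _ = ENNReal.ofReal ((max A 1) ^ m₂) * μ g := by rw [hgsum]
        have hzmid : μ (ball δ z (β * Rx x)) ≤
            ENNReal.ofReal (1 / σ₀) * (ENNReal.ofReal ((max A 1) ^ m₂) * μ g) := by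
          have h1 : μ (ball δ z (β * Rx x)) =
              ENNReal.ofReal (1 / σ₀) * (ENNReal.ofReal σ₀ * μ (ball δ z (β * Rx x))) := by
            rw [← mul_assoc, ← ENNReal.ofReal_mul (by positivity)]
            rw [show 1 / σ₀ * σ₀ = 1 by field_simp]
            simp
          rw [h1]
          exact mul_le_mul_right hstep3 _
        calc μ (ball δ x (3 * Kδ * Rx x)) ≤
            ENNReal.ofReal ((max A 1) ^ m₄) * μ (ball δ z (β * Rx x)) := hstep1
          _ ≤ ENNReal.ofReal ((max A 1) ^ m₄) *
              (ENNReal.ofReal (1 / σ₀) * (ENNReal.ofReal ((max A 1) ^ m₂) * μ g)) :=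
              mul_le_mul_right hzmid _
          _ = ENNReal.ofReal T * μ g := by
              rw [hT, ENNReal.ofReal_mul (by positivity), ENNReal.ofReal_mul (by positivity)]
              ring
    -- Vitali covering argument
    set Tset : Set X := {x ∈ ball δ x₀ r₀ | distE δ E x < p₁ * ε} with hTsetdef
    obtain ⟨u, huT, hu_disj, hu_cov⟩ :=
      Vitali.exists_disjoint_subfamily_covering_enlargement
        (fun y => ball δ y (Rx y)) Tset Rx 2 one_lt_two
        (fun a ha => (hbasic a ha.1).1.le) (2 * Kδ * r₀)
        (fun a ha => (hbasic a ha.1).2.1)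
        (fun a ha => ⟨a, show δ a a < Rx a by
          rw [(hδeq a a).mpr rfl]; exact (hbasic a ha.1).1⟩)
    choose g hg_meas hg_sub hg_ann hg_bnd using main
    -- countability of the subfamily
    have hbig : ∀ b : X, b ∈ u → ball δ b (Rx b) ⊆ ball δ x₀ (3 * Kδ ^ 2 * r₀) := by
      intro b hbu y hy
      have hb0 : b ∈ ball δ x₀ r₀ := (huT hbu).1
      have h1 : δ x₀ b < r₀ := hb0
      have h2 : δ b y < Rx b := hy
      have h3 : Rx b ≤ 2 * Kδ * r₀ := (hbasic b hb0).2.1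
      have htri := hδtri x₀ b y
      show δ x₀ y < 3 * Kδ ^ 2 * r₀
      have h4 : δ x₀ b + δ b y < r₀ + 2 * Kδ * r₀ := by linarith only [h1, h2, h3]
      have h5 := mul_lt_mul_of_pos_left h4 hKδ0
      have h6 : Kδ * r₀ ≤ Kδ * (Kδ * r₀) := le_mul_of_one_le_left (by positivity) hK1δ
      linarith only [htri, h5, h6]
    have hcu : Countable ↥u := by
      have hcnt := MeasureTheory.Measure.countable_meas_pos_of_disjoint_of_meas_iUnion_ne_top μ
        (As := fun b : ↥u => ball δ (b : X) (Rx (b : X)))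
        (fun b => (hopenδ _ _).measurableSet)
        (fun b b' hbb' => hu_disj b.2 b'.2 (Subtype.coe_injective.ne hbb'))
        (by
          refine ne_of_lt (lt_of_le_of_lt (measure_mono ?_)
            (hfinδ x₀ (3 * Kδ ^ 2 * r₀) (by positivity)))
          exact Set.iUnion_subset (fun b => hbig (b : X) b.2))
      have huniv : {b : ↥u | 0 < μ (ball δ (b : X) (Rx (b : X)))} = Set.univ :=
        Set.eq_univ_of_forall (fun b => hposδ _ _ (hbasic (b : X) (huT b.2).1).1)
      rw [huniv] at hcnt
      exact Set.countable_univ_iff.mp hcnt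
    have hcover : Tset ⊆ ⋃ b : ↥u, ball δ (b : X) (3 * Kδ * Rx (b : X)) := by
      intro a ha
      obtain ⟨b, hbu, ⟨w, hw⟩, hab⟩ := hu_cov a ha
      refine Set.mem_iUnion.mpr ⟨⟨b, hbu⟩, ?_⟩
      have hw1 : δ a w < Rx a := hw.1
      have hw2 : δ b w < Rx b := hw.2
      have htri := hδtri b w a
      have h2 : δ w a < 2 * Rx b := by
        rw [hδsymm w a]; linarith
      show δ b a < 3 * Kδ * Rx b
      have h5 : δ b w + δ w a < 3 * Rx b := by linarith only [hw2, h2]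
      have h6 := mul_lt_mul_of_pos_left h5 hKδ0
      linarith only [htri, h6]
    set Gu : ↥u → Set X := fun b => g (b : X) (huT b.2).1 (huT b.2).2 with hGudef
    have hGu_disj : Pairwise (Function.onFun Disjoint Gu) := by
      intro b b' hbb'
      exact (hu_disj b.2 b'.2 (Subtype.coe_injective.ne hbb')).mono
        (hg_sub _ _ _) (hg_sub _ _ _)
    have hGu_meas : ∀ b, MeasurableSet (Gu b) := fun b => hg_meas _ _ _
    have hGsum : μ (⋃ b : ↥u, Gu b) = ∑' b : ↥u, μ (Gu b) :=
      measure_iUnion hGu_disj hGu_meas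
    have hGu_sub_diff : (⋃ b : ↥u, Gu b) ⊆
        {x ∈ ball δ x₀ r₀ | distE δ E x < ε'} \ Tset := by
      intro w hw
      obtain ⟨b, hb⟩ := Set.mem_iUnion.mp hw
      obtain ⟨hwB, hwlo, hwhi⟩ := hg_ann _ _ _ w hb
      rw [← hεN]
      exact ⟨⟨hwB, hwhi⟩, fun hcon => absurd hcon.2 (not_lt.mpr hwlo)⟩
    have hchain : μ Tset ≤ ENNReal.ofReal T *
        μ ({x ∈ ball δ x₀ r₀ | distE δ E x < ε'} \ Tset) := by
      calc μ Tset ≤ μ (⋃ b : ↥u, ball δ (b : X) (3 * Kδ * Rx (b : X))) :=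
            measure_mono hcover
        _ ≤ ∑' b : ↥u, μ (ball δ (b : X) (3 * Kδ * Rx (b : X))) := measure_iUnion_le _
        _ ≤ ∑' b : ↥u, ENNReal.ofReal T * μ (Gu b) :=
            ENNReal.tsum_le_tsum (fun b => hg_bnd _ _ _)
        _ = ENNReal.ofReal T * ∑' b : ↥u, μ (Gu b) := ENNReal.tsum_mul_left
        _ = ENNReal.ofReal T * μ (⋃ b : ↥u, Gu b) := by rw [hGsum]
        _ ≤ _ := mul_le_mul_right (measure_mono hGu_sub_diff) _
    -- endgame algebra
    have hTmeas : NullMeasurableSet Tset μ := by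
      have : Tset = ball δ x₀ r₀ ∩ {x | distE δ E x < p₁ * ε} := rfl
      rw [this]
      exact (((hopenδ x₀ r₀).inter (distE_open hδQD hopenδ hE _)).measurableSet).nullMeasurableSet
    have hsub2 : Tset ⊆ {x ∈ ball δ x₀ r₀ | distE δ E x < ε'} := by
      intro w hw
      refine ⟨hw.1, lt_of_lt_of_le hw.2 ?_⟩
      have h1 : p₁ * ε ≤ ε := mul_le_of_le_one_left hε0.le hp₁1.le
      linarith only [h1, hεle]
    have hane : μ Tset ≠ ⊤ :=
      (lt_of_le_of_lt (measure_mono (fun w hw => hw.1)) (hfinδ x₀ r₀ hr₀)).ne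
    have haleb : μ Tset ≤ μ {x ∈ ball δ x₀ r₀ | distE δ E x < ε'} := measure_mono hsub2
    have hdiffeq : μ ({x ∈ ball δ x₀ r₀ | distE δ E x < ε'} \ Tset) =
        μ {x ∈ ball δ x₀ r₀ | distE δ E x < ε'} - μ Tset :=
      measure_diff hsub2 hTmeas hane
    rw [hdiffeq] at hchain
    have hgoal_eq : {x ∈ ball δ x₀ r₀ | distE δ E x < p * ε'} = Tset := by
      rw [hTsetdef, hpε]
    rw [hgoal_eq]
    set a : ℝ≥0∞ := μ Tset
    set b : ℝ≥0∞ := μ {x ∈ ball δ x₀ r₀ | distE δ E x < ε'}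
    have halg : (1 + ENNReal.ofReal T) * a ≤ ENNReal.ofReal T * b := by
      have h1 : a + ENNReal.ofReal T * a ≤
          ENNReal.ofReal T * (b - a) + ENNReal.ofReal T * a :=
        add_le_add_left hchain _
      have h2 : ENNReal.ofReal T * (b - a) + ENNReal.ofReal T * a = ENNReal.ofReal T * b := by
        rw [← mul_add, tsub_add_cancel_of_le haleb]
      calc (1 + ENNReal.ofReal T) * a = a + ENNReal.ofReal T * a := by ring
        _ ≤ _ := h1
        _ = _ := h2
    have hq_eq : ENNReal.ofReal q * (1 + ENNReal.ofReal T) = ENNReal.ofReal T := by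
      rw [← ENNReal.ofReal_one, ← ENNReal.ofReal_add zero_le_one hT0.le,
        ← ENNReal.ofReal_mul hq0.le]
      congr 1
      rw [hq]
      have h1T : (1:ℝ) + T ≠ 0 := by positivity
      field_simp
    have hTne0 : ENNReal.ofReal T ≠ 0 := by
      simp only [ne_eq, ENNReal.ofReal_eq_zero, not_le]
      exact hT0
    have hTnetop : ENNReal.ofReal T ≠ ⊤ := ENNReal.ofReal_ne_top
    have hfinal : ENNReal.ofReal T * a ≤ ENNReal.ofReal T * (ENNReal.ofReal q * b) := by
      calc ENNReal.ofReal T * a = ENNReal.ofReal q * (1 + ENNReal.ofReal T) * a := by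
            rw [hq_eq]
        _ = ENNReal.ofReal q * ((1 + ENNReal.ofReal T) * a) := by rw [mul_assoc]
        _ ≤ ENNReal.ofReal q * (ENNReal.ofReal T * b) := mul_le_mul_right halg _
        _ = ENNReal.ofReal T * (ENNReal.ofReal q * b) := by ring
    exact (ENNReal.mul_le_mul_iff_right hTne0 hTnetop).mp hfinal
  refine ⟨p, q, ⟨hp0, hp1⟩, ⟨hq0, hq1⟩, fun x₀ r₀ hr₀ _ => ⟨key x₀ r₀ hr₀, ?_⟩⟩
  intro k
  induction k with
  | zero =>
      simp only [pow_zero, one_mul]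
      exact measure_mono (fun w hw => hw.1)
  | succ k ih =>
      rcases lt_or_ge 0 (hole δ Kδ E x₀ r₀) with hpos | hneg
      · have hεp : 0 < p ^ k / 2 * hole δ Kδ E x₀ r₀ := by positivity
        have hpk : p ^ k ≤ 1 := pow_le_one₀ hp0.le hp1.le
        have hlt : p ^ k / 2 * hole δ Kδ E x₀ r₀ < hole δ Kδ E x₀ r₀ := by
          have h1 : p ^ k / 2 ≤ 1 / 2 := by linarith only [hpk]
          have h2 := mul_le_mul_of_nonneg_right h1 hpos.le
          linarith only [h2, hpos]
        have hstep := key x₀ r₀ hr₀ (p ^ k / 2 * hole δ Kδ E x₀ r₀) hεp hlt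
        have heqs : p * (p ^ k / 2 * hole δ Kδ E x₀ r₀) =
            p ^ (k + 1) / 2 * hole δ Kδ E x₀ r₀ := by ring
        rw [heqs] at hstep
        calc μ {x ∈ ball δ x₀ r₀ | distE δ E x < p ^ (k + 1) / 2 * hole δ Kδ E x₀ r₀}
            ≤ ENNReal.ofReal q *
              μ {x ∈ ball δ x₀ r₀ | distE δ E x < p ^ k / 2 * hole δ Kδ E x₀ r₀} := hstep
          _ ≤ ENNReal.ofReal q * (ENNReal.ofReal q ^ k * μ (ball δ x₀ r₀)) :=
              mul_le_mul_right ih _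
          _ = ENNReal.ofReal q ^ (k + 1) * μ (ball δ x₀ r₀) := by ring
      · have hzero : hole δ Kδ E x₀ r₀ = 0 :=
          le_antisymm hneg (hole_nonneg _ _ _ _ _)
        have hempty : {x ∈ ball δ x₀ r₀ | distE δ E x <
            p ^ (k + 1) / 2 * hole δ Kδ E x₀ r₀} = ∅ := by
          rw [hzero]
          ext w
          simp only [mul_zero, Set.mem_setOf_eq, Set.mem_empty_iff_false, iff_false, not_and,
            not_lt]
          exact fun _ => distE_nonneg hδQD E w
        rw [hempty]
        simp


end WPA1
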